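/- arXiv:1408.4894 — 4 statements merged into one kernel-verified Lean document; each statement's English description precedes it below -/
import Mathlib

section
/- Let V : ℝⁿ → ℝⁿ be a continuous vector field, φ : ℝⁿ → ℝ a C¹ function, and κ : ℝⁿ → ℝ a continuous function such that the Lie derivative identity ⟨∇φ(p), V(p)⟩ = κ(p)·φ(p) holds for every p ∈ ℝⁿ. Let x : [0,T] → ℝⁿ be differentiable with x'(t) = V(x(t)) for all t ∈ [0,T]. If φ(x(0)) = 0, then φ(x(t)) = 0 for all t ∈ [0,T]; i.e. the zero level set of φ is invariant under the flow of V. -/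
open scoped RealInnerProductSpace

/-- Darboux invariance criterion: if the Lie derivative of `φ` along the vector field `V`
satisfies `L_V φ = κ · φ` for a continuous cofactor `κ`, then the zero level set of `φ`
is invariant under the flow of `V`. -/
theorem darboux_invariance {n : ℕ}
    (V : EuclideanSpace ℝ (Fin n) → EuclideanSpace ℝ (Fin n))
    (φ : EuclideanSpace ℝ (Fin n) → ℝ)
    (κ : EuclideanSpace ℝ (Fin n) → ℝ)
    (hV : Continuous V) (hφ : ContDiff ℝ 1 φ) (hκ : Continuous κ)
    (hLie : ∀ p, ⟪gradient φ p, V p⟫ = κ p * φ p)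
    (T : ℝ) (x : ℝ → EuclideanSpace ℝ (Fin n))
    (hsol : ∀ t ∈ Set.Icc (0 : ℝ) T, HasDerivAt x (V (x t)) t)
    (h0 : φ (x 0) = 0) :
    ∀ t ∈ Set.Icc (0 : ℝ) T, φ (x t) = 0 := by
  set y : ℝ → ℝ := fun t => φ (x t) with hy
  have hgrad : ∀ p, HasGradientAt φ (gradient φ p) p := fun p =>
    ((hφ.differentiable one_ne_zero) p).hasGradientAt
  have hy' : ∀ t ∈ Set.Icc (0 : ℝ) T, HasDerivAt y (κ (x t) * y t) t := by
    intro t ht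
    have h1 : HasDerivAt y (⟪gradient φ (x t), V (x t)⟫) t := by
      have := ((hgrad (x t)).hasFDerivAt).comp_hasDerivAt t (hsol t ht)
      simpa [InnerProductSpace.toDual_apply_apply, hy, Function.comp_def] using this
    simpa [hLie (x t)] using h1
  -- continuity of y on the interval
  have hxc : ContinuousOn x (Set.Icc 0 T) := fun t ht =>
    (hsol t ht).continuousAt.continuousWithinAt
  have hyc : ContinuousOn y (Set.Icc 0 T) :=
    (hφ.continuous.comp_continuousOn hxc)
  -- bound on κ ∘ x
  obtain ⟨K, hK⟩ := (isCompact_Icc (a := (0:ℝ)) (b := T)).exists_bound_of_continuousOn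
    (hκ.comp_continuousOn hxc)
  intro t ht
  have key := norm_le_gronwallBound_of_norm_deriv_right_le (δ := 0) (K := K) (ε := 0)
    (f := y) (f' := fun t => κ (x t) * y t) hyc
    (fun s hs => (hy' s (Set.mem_Icc_of_Ico hs)).hasDerivWithinAt)
    (by simp [hy, h0])
    (fun s hs => by
      have hb := hK s (Set.mem_Icc_of_Ico hs)
      rw [norm_mul]
      simpa using mul_le_mul_of_nonneg_right hb (norm_nonneg (y s))) t ht
  have : ‖y t‖ ≤ 0 := by simpa [gronwallBound_ε0_δ0] using key
  simpa [hy] using le_antisymm this (norm_nonneg _)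
end

section
/- Let F₁(x) = −1/(1 + x) for x ≠ −1, let μ₁ ∈ ℝ, and let F₂ : ℝ \ {−1, 1} → ℝ satisfy (x² − 1)·F₂(x) = μ₁ − F₁(x)·F₁'(x) for all x ∉ {−1, 1} (the order-ε² condition of the invariance equation for the Van der Pol system with μ₀ = 1). Then F₂ has a finite limit as x → 1 if and only if μ₁ = −1/8, and in that case F₂(x) = −(x² + 4x + 7)/(8(1 + x)⁴) for all x ∉ {−1, 1}. -/
open Filter Topology

/-- Order-`ε²` condition for the Van der Pol canard (with `μ₀ = 1`): if
`(x² − 1)·F₂(x) = μ₁ − F₁(x)·F₁'(x)` away from `x = ±1`, where `F₁(x) = −1/(1+x)`,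
then `F₂` has a finite limit as `x → 1` iff `μ₁ = −1/8`, in which case
`F₂(x) = −(x² + 4x + 7)/(8(1+x)⁴)`. -/
theorem vdp_order_two (μ₁ : ℝ) (F₂ : ℝ → ℝ)
    (F₁ : ℝ → ℝ) (hF₁ : F₁ = fun x => -1 / (1 + x))
    (h : ∀ x : ℝ, x ≠ -1 → x ≠ 1 → (x ^ 2 - 1) * F₂ x = μ₁ - F₁ x * deriv F₁ x) :
    ((∃ L : ℝ, Tendsto F₂ (𝓝[≠] (1 : ℝ)) (𝓝 L)) ↔ μ₁ = -1 / 8) ∧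
    (μ₁ = -1 / 8 → ∀ x : ℝ, x ≠ -1 → x ≠ 1 →
      F₂ x = -(x ^ 2 + 4 * x + 7) / (8 * (1 + x) ^ 4)) := by
  -- derivative of F₁
  have hderiv : ∀ x : ℝ, x ≠ -1 → deriv F₁ x = 1 / (1 + x) ^ 2 := by
    intro x hx
    have hne : (1 : ℝ) + x ≠ 0 := by
      intro h0; apply hx; linarith
    have h1 : HasDerivAt (fun y : ℝ => 1 + y) 1 x := by
      simpa using (hasDerivAt_id x).const_add 1
    have h2 : HasDerivAt (fun y : ℝ => (1 + y)⁻¹) (-1 / (1 + x) ^ 2) x := by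
      simpa [Pi.inv_def] using h1.inv hne
    have h3 : HasDerivAt F₁ (1 / (1 + x) ^ 2) x := by
      rw [hF₁]
      simpa [neg_div, one_div, Pi.neg_def] using h2.neg
    exact h3.deriv
  -- simplified equation
  have heq : ∀ x : ℝ, x ≠ -1 → x ≠ 1 → (x ^ 2 - 1) * F₂ x = μ₁ + 1 / (1 + x) ^ 3 := by
    intro x hx hx1
    have hne : (1 : ℝ) + x ≠ 0 := by intro h0; apply hx; linarith
    rw [h x hx hx1, hderiv x hx, hF₁]
    field_simp
    ring
  -- the explicit formula under μ₁ = -1/8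
  have hformula : μ₁ = -1 / 8 → ∀ x : ℝ, x ≠ -1 → x ≠ 1 →
      F₂ x = -(x ^ 2 + 4 * x + 7) / (8 * (1 + x) ^ 4) := by
    intro hμ x hx hx1
    have hne : (1 : ℝ) + x ≠ 0 := by intro h0; apply hx; linarith
    have hsq : x ^ 2 - 1 ≠ 0 := by
      intro h0
      have : (x - 1) * (x + 1) = 0 := by ring_nf; linarith [h0]
      rcases mul_eq_zero.1 this with h' | h'
      · exact hx1 (by linarith)
      · exact hx (by linarith)
    have := heq x hx hx1
    rw [hμ] at this
    have key : (x ^ 2 - 1) * F₂ x = (x ^ 2 - 1) * (-(x ^ 2 + 4 * x + 7) / (8 * (1 + x) ^ 4)) := by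
      rw [this]; field_simp; ring
    exact mul_left_cancel₀ hsq key
  -- eventually x ≠ -1 near 1
  have hev : ∀ᶠ x in 𝓝[≠] (1 : ℝ), x ≠ -1 ∧ x ≠ 1 := by
    have h1 : ∀ᶠ x in 𝓝 (1 : ℝ), x ≠ -1 := eventually_ne_nhds (by norm_num)
    filter_upwards [nhdsWithin_le_nhds h1, self_mem_nhdsWithin] with x hx hx1
    exact ⟨hx, hx1⟩
  constructor
  · constructor
    · rintro ⟨L, hL⟩
      -- (x²-1)·F₂ x tends to 0 and to μ₁ + 1/8
      have htzero : Tendsto (fun x => (x ^ 2 - 1) * F₂ x) (𝓝[≠] (1 : ℝ)) (𝓝 0) := by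
        have h1 : Tendsto (fun x : ℝ => x ^ 2 - 1) (𝓝[≠] (1 : ℝ)) (𝓝 0) := by
          have : ContinuousAt (fun x : ℝ => x ^ 2 - 1) 1 := by fun_prop
          have := this.tendsto.mono_left (nhdsWithin_le_nhds (s := {(1:ℝ)}ᶜ))
          simpa using this
        simpa using h1.mul hL
      have htval : Tendsto (fun x => (x ^ 2 - 1) * F₂ x) (𝓝[≠] (1 : ℝ)) (𝓝 (μ₁ + 1 / 8)) := by
        have hc : ContinuousAt (fun x : ℝ => μ₁ + 1 / (1 + x) ^ 3) 1 := by
          apply ContinuousAt.add continuousAt_const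
          apply ContinuousAt.div continuousAt_const (by fun_prop)
          norm_num
        have h2 : Tendsto (fun x : ℝ => μ₁ + 1 / (1 + x) ^ 3) (𝓝[≠] (1 : ℝ))
            (𝓝 (μ₁ + 1 / 8)) := by
          have := hc.tendsto.mono_left (nhdsWithin_le_nhds (s := {(1:ℝ)}ᶜ))
          convert this using 2
          norm_num
        refine h2.congr' ?_
        filter_upwards [hev] with x hx
        exact (heq x hx.1 hx.2).symm
      have := tendsto_nhds_unique htzero htval
      linarith
    · intro hμ
      refine ⟨-3 / 32, ?_⟩
      have hc : ContinuousAt (fun x : ℝ => -(x ^ 2 + 4 * x + 7) / (8 * (1 + x) ^ 4)) 1 := by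
        apply ContinuousAt.div (by fun_prop) (by fun_prop)
        norm_num
      have h2 : Tendsto (fun x : ℝ => -(x ^ 2 + 4 * x + 7) / (8 * (1 + x) ^ 4))
          (𝓝[≠] (1 : ℝ)) (𝓝 (-3 / 32)) := by
        have := hc.tendsto.mono_left (nhdsWithin_le_nhds (s := {(1:ℝ)}ᶜ))
        convert this using 2
        norm_num
      refine h2.congr' ?_
      filter_upwards [hev] with x hx
      exact (hformula hμ x hx.1 hx.2).symm
  · exact hformula
end

section
/- Let F₁(x) = −1/(1 + x) and F₂(x) = −(x² + 4x + 7)/(8(1 + x)⁴) for x ≠ −1, let μ₂ ∈ ℝ, and let F₃ : ℝ \ {−1, 1} → ℝ satisfy (x² − 1)·F₃(x) = μ₂ − (F₁'(x)·F₂(x) + F₂'(x)·F₁(x)) for all x ∉ {−1, 1} (the order-ε³ condition of the invariance equation for the Van der Pol system with μ₀ = 1 and μ₁ = −1/8). Then F₃ has a finite limit as x → 1 if and only if μ₂ = −3/32. -/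
open Filter Topology

/-- Order-`ε³` condition for the Van der Pol canard (with `μ₀ = 1`, `μ₁ = −1/8`): if
`(x² − 1)·F₃(x) = μ₂ − (F₁'(x)·F₂(x) + F₂'(x)·F₁(x))` away from `x = ±1`, where
`F₁(x) = −1/(1+x)` and `F₂(x) = −(x² + 4x + 7)/(8(1+x)⁴)`, then `F₃` has a finite
limit as `x → 1` iff `μ₂ = −3/32`. -/
theorem vdp_order_three (μ₂ : ℝ) (F₃ : ℝ → ℝ)
    (F₁ F₂ : ℝ → ℝ)
    (hF₁ : F₁ = fun x => -1 / (1 + x))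
    (hF₂ : F₂ = fun x => -(x ^ 2 + 4 * x + 7) / (8 * (1 + x) ^ 4))
    (h : ∀ x : ℝ, x ≠ -1 → x ≠ 1 →
      (x ^ 2 - 1) * F₃ x = μ₂ - (deriv F₁ x * F₂ x + deriv F₂ x * F₁ x)) :
    (∃ L : ℝ, Tendsto F₃ (𝓝[≠] (1 : ℝ)) (𝓝 L)) ↔ μ₂ = -3 / 32 := by
  have hd1 : ∀ x : ℝ, x ≠ -1 → deriv F₁ x = 1 / (1 + x) ^ 2 := by
    intro x hx
    have h0 : (1 : ℝ) + x ≠ 0 := fun hc => hx (by linarith)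
    have hden : HasDerivAt (fun x : ℝ => 1 + x) 1 x := by
      simpa using (hasDerivAt_id x).const_add (1 : ℝ)
    have hdiv := (hasDerivAt_const x (-1 : ℝ)).div hden h0
    have : HasDerivAt F₁ (1 / (1 + x) ^ 2) x := by
      rw [hF₁]
      refine hdiv.congr_deriv ?_
      ring
    exact this.deriv
  have hd2 : ∀ x : ℝ, x ≠ -1 → deriv F₂ x = (x ^ 2 + 5 * x + 12) / (4 * (1 + x) ^ 5) := by
    intro x hx
    have h0 : (1 : ℝ) + x ≠ 0 := fun hc => hx (by linarith)
    have h1 : HasDerivAt (fun x : ℝ => 1 + x) 1 x := by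
      simpa using (hasDerivAt_id x).const_add (1 : ℝ)
    have hden : HasDerivAt (fun x : ℝ => 8 * (1 + x) ^ 4) (8 * (4 * (1 + x) ^ 3)) x := by
      simpa using (h1.pow 4).const_mul (8 : ℝ)
    have hnum : HasDerivAt (fun x : ℝ => -(x ^ 2 + 4 * x + 7)) (-(2 * x + 4)) x := by
      have hp : HasDerivAt (fun x : ℝ => x ^ 2 + 4 * x + 7) (2 * x + 4) x := by
        have := ((hasDerivAt_pow 2 x).add ((hasDerivAt_id x).const_mul 4)).add_const (7 : ℝ)
        simpa using this
      exact hp.neg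
    have hden0 : (8 : ℝ) * (1 + x) ^ 4 ≠ 0 := by positivity
    have hdiv := hnum.div hden hden0
    have : HasDerivAt F₂ ((x ^ 2 + 5 * x + 12) / (4 * (1 + x) ^ 5)) x := by
      rw [hF₂]
      refine hdiv.congr_deriv ?_
      rw [div_eq_div_iff (pow_ne_zero _ hden0) (mul_ne_zero (by norm_num : (4:ℝ) ≠ 0) (pow_ne_zero _ h0))]
      ring
    exact this.deriv
  have key : ∀ x : ℝ, x ≠ -1 → x ≠ 1 →
      (x ^ 2 - 1) * F₃ x = μ₂ - (-3 * x ^ 2 - 14 * x - 31) / (8 * (1 + x) ^ 6) := by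
    intro x hx hx1
    have h0 : (1 : ℝ) + x ≠ 0 := fun hc => hx (by linarith)
    rw [h x hx hx1, hd1 x hx, hd2 x hx, hF₁, hF₂]
    field_simp
    ring
  have hev : ∀ᶠ x in 𝓝[≠] (1 : ℝ), x ≠ -1 ∧ x ≠ 1 := by
    have h1 : ∀ᶠ x in 𝓝 (1 : ℝ), x ≠ -1 := eventually_ne_nhds (by norm_num)
    filter_upwards [h1.filter_mono nhdsWithin_le_nhds, self_mem_nhdsWithin] with x ha hb
    exact ⟨ha, hb⟩
  have hg : Tendsto (fun x : ℝ => μ₂ - (-3 * x ^ 2 - 14 * x - 31) / (8 * (1 + x) ^ 6))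
      (𝓝 (1 : ℝ)) (𝓝 (μ₂ + 3 / 32)) := by
    have hc : ContinuousAt (fun x : ℝ => μ₂ - (-3 * x ^ 2 - 14 * x - 31) / (8 * (1 + x) ^ 6)) 1 := by
      apply ContinuousAt.sub continuousAt_const
      exact ContinuousAt.div (by fun_prop) (by fun_prop) (by norm_num)
    have := hc.tendsto
    convert this using 2
    norm_num
  constructor
  · rintro ⟨L, hL⟩
    have hx2 : Tendsto (fun x : ℝ => x ^ 2 - 1) (𝓝[≠] (1 : ℝ)) (𝓝 0) := by
      have : Tendsto (fun x : ℝ => x ^ 2 - 1) (𝓝 (1 : ℝ)) (𝓝 ((1 : ℝ) ^ 2 - 1)) :=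
        ((continuous_pow 2).sub continuous_const).continuousAt
      simpa using this.mono_left nhdsWithin_le_nhds
    have h1 : Tendsto (fun x : ℝ => (x ^ 2 - 1) * F₃ x) (𝓝[≠] (1 : ℝ)) (𝓝 0) := by
      simpa using hx2.mul hL
    have h2 : Tendsto (fun x : ℝ => (x ^ 2 - 1) * F₃ x) (𝓝[≠] (1 : ℝ)) (𝓝 (μ₂ + 3 / 32)) := by
      apply Tendsto.congr' _ (hg.mono_left nhdsWithin_le_nhds)
      filter_upwards [hev] with x hx
      exact (key x hx.1 hx.2).symm
    have := tendsto_nhds_unique h1 h2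
    linarith
  · intro hμ
    refine ⟨-31 / 256, ?_⟩
    set φ : ℝ → ℝ := fun x =>
      (-3 * x ^ 5 - 21 * x ^ 4 - 66 * x ^ 3 - 126 * x ^ 2 - 159 * x - 121) / (32 * (1 + x) ^ 7)
      with hφdef
    have hφ : Tendsto φ (𝓝[≠] (1 : ℝ)) (𝓝 (-31 / 256)) := by
      have hc : ContinuousAt φ 1 :=
        ContinuousAt.div (by fun_prop) (by fun_prop) (by norm_num)
      have ht : Tendsto φ (𝓝[≠] (1 : ℝ)) (𝓝 (φ 1)) :=
        hc.tendsto.mono_left nhdsWithin_le_nhds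
      convert ht using 2
      simp only [hφdef]
      norm_num
    have heq : φ =ᶠ[𝓝[≠] (1 : ℝ)] F₃ := by
      filter_upwards [hev] with x hx
      obtain ⟨ha, hb⟩ := hx
      have h0 : (1 : ℝ) + x ≠ 0 := fun hc => ha (by linarith)
      have hx2 : x ^ 2 - 1 ≠ 0 := by
        intro hc
        have : (x - 1) * (x + 1) = 0 := by linear_combination hc
        rcases mul_eq_zero.mp this with h' | h'
        · exact hb (by linarith)
        · exact ha (by linarith)
      have hk := key x ha hb
      have hF : F₃ x = (μ₂ - (-3 * x ^ 2 - 14 * x - 31) / (8 * (1 + x) ^ 6)) / (x ^ 2 - 1) := by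
        rw [eq_div_iff hx2]
        linarith [hk]
      rw [hF, hμ, hφdef]
      field_simp
      ring
    exact hφ.congr' heq
end

section
/- Define, for x ≠ −1 and ε ∈ ℝ, F(x, ε) = (x³/3 − x) − ε/(1 + x) − ε²·(x² + 4x + 7)/(8(1 + x)⁴) and μ(ε) = 1 − ε/8 − 3ε²/32, and let R(x, ε) = (∂F/∂x)(x, ε)·( x + F(x, ε) − x³/3 ) − ε·( μ(ε) − x ) be the residual of the invariance equation of the Van der Pol system. Then for every compact set K ⊆ ℝ \ {−1} there exists a constant C > 0 such that |R(x, ε)| ≤ C·ε³ for all x ∈ K and all ε ∈ (0, 1]. -/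
/-- The truncated canard expansion of the Van der Pol slow invariant manifold. -/
noncomputable def vdpF (x ε : ℝ) : ℝ :=
  (x ^ 3 / 3 - x) - ε / (1 + x) - ε ^ 2 * (x ^ 2 + 4 * x + 7) / (8 * (1 + x) ^ 4)

/-- The canard value of the bifurcation parameter up to order `ε²`. -/
noncomputable def vdpμ (ε : ℝ) : ℝ := 1 - ε / 8 - 3 * ε ^ 2 / 32

/-- The residual of the invariance equation of the Van der Pol system for the
truncated canard expansion. -/
noncomputable def vdpR (x ε : ℝ) : ℝ :=
  deriv (fun x' => vdpF x' ε) x * (x + vdpF x ε - x ^ 3 / 3) - ε * (vdpμ ε - x)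

noncomputable def vdpG (x ε : ℝ) : ℝ :=
  3/32 - (x^2+4*x+7)/(8*(1+x)^6) - (x^2+5*x+12)/(4*(1+x)^6)
    - ε*(x^2+5*x+12)*(x^2+4*x+7)/(32*(1+x)^9)

lemma vdp_hasDerivAt (ε x : ℝ) (hx : 1 + x ≠ 0) :
    HasDerivAt (fun x' => vdpF x' ε)
      ((x^2 - 1) + ε/(1+x)^2 + ε^2*(x^2+5*x+12)/(4*(1+x)^5)) x := by
  have hA : HasDerivAt (fun x' : ℝ => x' ^ 3 / 3 - x') (x^2 - 1) x := by
    have := ((hasDerivAt_pow 3 x).div_const 3).sub (hasDerivAt_id x)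
    exact this.congr_deriv (by norm_num)
  have hden : HasDerivAt (fun x' : ℝ => 1 + x') 1 x := by
    simpa using (hasDerivAt_id x).const_add (1:ℝ)
  have hB : HasDerivAt (fun x' : ℝ => ε / (1 + x'))
      ((0 * (1+x) - ε * 1) / (1+x)^2) x :=
    (hasDerivAt_const x ε).div hden hx
  have hN : HasDerivAt (fun x' : ℝ => ε ^ 2 * (x'^2 + 4*x' + 7)) (ε^2 * (2*x + 4)) x := by
    have : HasDerivAt (fun x' : ℝ => x'^2 + 4*x' + 7) (2*x + 4) x := by
      have := ((hasDerivAt_pow 2 x).add ((hasDerivAt_id x).const_mul 4)).add_const 7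
      exact this.congr_deriv (by norm_num)
    simpa using this.const_mul (ε^2)
  have hD : HasDerivAt (fun x' : ℝ => 8 * (1 + x') ^ 4) (8 * (4 * (1+x)^3)) x := by
    have := (hden.pow 4).const_mul (8:ℝ)
    exact this.congr_deriv (by norm_num)
  have hD0 : 8 * (1 + x) ^ 4 ≠ 0 := by positivity
  have hC : HasDerivAt (fun x' : ℝ => ε ^ 2 * (x'^2 + 4*x' + 7) / (8 * (1 + x') ^ 4))
      ((ε^2 * (2*x+4) * (8*(1+x)^4) - ε^2 * (x^2+4*x+7) * (8*(4*(1+x)^3))) / (8*(1+x)^4)^2) x :=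
    hN.div hD hD0
  have h := (hA.sub hB).sub hC
  have he : (fun x' => vdpF x' ε)
      = fun x' : ℝ => x' ^ 3 / 3 - x' - ε / (1 + x') - ε ^ 2 * (x'^2 + 4*x' + 7) / (8 * (1 + x') ^ 4) := by
    funext x'
    simp [vdpF]
  rw [he]
  refine h.congr_deriv ?_
  field_simp
  ring

lemma vdpR_eq (x ε : ℝ) (hx : 1 + x ≠ 0) : vdpR x ε = ε ^ 3 * vdpG x ε := by
  have hd := (vdp_hasDerivAt ε x hx).deriv
  rw [vdpR, hd, vdpF, vdpμ, vdpG]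
  field_simp
  ring

/-- On every compact set avoiding `x = −1`, the residual of the invariance equation
for the truncated canard expansion is `O(ε³)` uniformly for `ε ∈ (0, 1]`. -/
theorem vdp_residual_cubic (K : Set ℝ) (hK : IsCompact K) (hK' : K ⊆ {x : ℝ | x ≠ -1}) :
    ∃ C : ℝ, 0 < C ∧ ∀ x ∈ K, ∀ ε ∈ Set.Ioc (0 : ℝ) 1, |vdpR x ε| ≤ C * ε ^ 3 := by
  have hne : ∀ x ∈ K, 1 + x ≠ 0 := by
    intro x hx h
    exact hK' hx (by linarith)
  set M : ℝ → ℝ := fun x =>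
    |3/32 - (x^2+4*x+7)/(8*(1+x)^6) - (x^2+5*x+12)/(4*(1+x)^6)|
      + |(x^2+5*x+12)*(x^2+4*x+7)/(32*(1+x)^9)| with hM
  have hcont : ContinuousOn M K := by
    apply ContinuousOn.add
    · apply ContinuousOn.abs
      apply ContinuousOn.sub
      apply ContinuousOn.sub
      · exact continuousOn_const
      · exact ContinuousOn.div (by fun_prop) (by fun_prop)
          (fun x hx => by have := hne x hx; positivity)
      · exact ContinuousOn.div (by fun_prop) (by fun_prop)
          (fun x hx => by have := hne x hx; positivity)
    · apply ContinuousOn.abs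
      exact ContinuousOn.div (by fun_prop) (by fun_prop)
        (fun x hx => mul_ne_zero (by norm_num) (pow_ne_zero 9 (hne x hx)))
  rcases K.eq_empty_or_nonempty with rfl | hKne
  · exact ⟨1, one_pos, by simp⟩
  obtain ⟨x₀, _, hx₀⟩ := hK.exists_isMaxOn hKne hcont
  have hM0 : 0 ≤ M x₀ := add_nonneg (abs_nonneg _) (abs_nonneg _)
  refine ⟨M x₀ + 1, by linarith, ?_⟩
  intro x hx ε hε
  rw [vdpR_eq x ε (hne x hx)]
  rw [abs_mul, abs_pow, abs_of_pos hε.1]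
  rw [mul_comm (M x₀ + 1) (ε^3)]
  apply mul_le_mul_of_nonneg_left _ (pow_nonneg hε.1.le 3)
  have hGle : |vdpG x ε| ≤ M x := by
    rw [vdpG, hM]
    have h1 : |ε*(x^2+5*x+12)*(x^2+4*x+7)/(32*(1+x)^9)|
        ≤ |(x^2+5*x+12)*(x^2+4*x+7)/(32*(1+x)^9)| := by
      rw [show ε*(x^2+5*x+12)*(x^2+4*x+7)/(32*(1+x)^9)
          = ε * ((x^2+5*x+12)*(x^2+4*x+7)/(32*(1+x)^9)) by ring, abs_mul]
      nth_rewrite 2 [show |(x^2+5*x+12)*(x^2+4*x+7)/(32*(1+x)^9)|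
          = 1 * |(x^2+5*x+12)*(x^2+4*x+7)/(32*(1+x)^9)| by ring]
      apply mul_le_mul_of_nonneg_right _ (abs_nonneg _)
      rw [abs_of_pos hε.1]; exact hε.2
    calc |vdpG x ε| ≤ |3/32 - (x^2+4*x+7)/(8*(1+x)^6) - (x^2+5*x+12)/(4*(1+x)^6)|
          + |ε*(x^2+5*x+12)*(x^2+4*x+7)/(32*(1+x)^9)| := by
            rw [vdpG]; exact abs_sub _ _
      _ ≤ _ := by exact add_le_add_right h1 _
  calc |vdpG x ε| ≤ M x := hGle
    _ ≤ M x₀ := hx₀ hx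
    _ ≤ M x₀ + 1 := by linarith
end
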